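/- If B is a Roman bondage set of G of minimum cardinality b_R(G), then γ_R(G − B) = γ_R(G) + 1. -/

import Mathlib

open SimpleGraph Finset

/-- A Roman dominating function: values in {0,1,2}, every 0-vertex has a neighbor with value 2. -/
def IsRDF {V : Type*} (G : SimpleGraph V) (f : V → ℕ) : Prop :=
  (∀ v, f v ≤ 2) ∧ ∀ v, f v = 0 → ∃ u, G.Adj v u ∧ f u = 2

/-- The Roman domination number: minimum weight of a Roman dominating function. -/
noncomputable def romanDom {V : Type*} [Fintype V] (G : SimpleGraph V) : ℕ :=
  sInf {k | ∃ f : V → ℕ, IsRDF G f ∧ ∑ v, f v = k}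

/-- A dominating set. -/
def IsDomSet {V : Type*} (G : SimpleGraph V) (S : Set V) : Prop :=
  ∀ v, v ∈ S ∨ ∃ u ∈ S, G.Adj u v

/-- The domination number. -/
noncomputable def domNum {V : Type*} [Fintype V] (G : SimpleGraph V) : ℕ :=
  sInf {k | ∃ S : Set V, IsDomSet G S ∧ S.ncard = k}

/-- Degree of a vertex. -/
noncomputable def deg {V : Type*} (G : SimpleGraph V) (v : V) : ℕ :=
  (G.neighborSet v).ncard

/-- Maximum degree. -/
noncomputable def maxDeg {V : Type*} (G : SimpleGraph V) : ℕ :=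
  sSup {d | ∃ v, deg G v = d}

/-- Minimum degree. -/
noncomputable def minDeg {V : Type*} (G : SimpleGraph V) : ℕ :=
  sInf {d | ∃ v, deg G v = d}

/-- The Roman bondage number: minimum size of an edge set whose deletion increases `romanDom`. -/
noncomputable def romanBondage {V : Type*} [Fintype V] (G : SimpleGraph V) : ℕ :=
  sInf {k | ∃ B : Set (Sym2 V), B ⊆ G.edgeSet ∧
    romanDom (G.deleteEdges B) > romanDom G ∧ B.ncard = k}

/-- The bondage number: minimum size of an edge set whose deletion increases `domNum`. -/
noncomputable def bondage {V : Type*} [Fintype V] (G : SimpleGraph V) : ℕ :=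
  sInf {k | ∃ B : Set (Sym2 V), B ⊆ G.edgeSet ∧
    domNum (G.deleteEdges B) > domNum G ∧ B.ncard = k}

/-- A vertex cover. -/
def IsVC {V : Type*} (G : SimpleGraph V) (S : Set V) : Prop :=
  ∀ u v, G.Adj u v → u ∈ S ∨ v ∈ S

/-- The vertex covering number. -/
noncomputable def vcNum {V : Type*} [Fintype V] (G : SimpleGraph V) : ℕ :=
  sInf {k | ∃ S : Set V, IsVC G S ∧ S.ncard = k}

lemma rdf_set_nonempty {V : Type*} [Fintype V] (G : SimpleGraph V) :
    {k | ∃ f : V → ℕ, IsRDF G f ∧ ∑ v, f v = k}.Nonempty :=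
  ⟨∑ v : V, 2, fun _ => 2, ⟨fun _ => le_refl 2, fun _ h => by simp at h⟩, rfl⟩

lemma romanDom_exists {V : Type*} [Fintype V] (G : SimpleGraph V) :
    ∃ f : V → ℕ, IsRDF G f ∧ ∑ v, f v = romanDom G :=
  Nat.sInf_mem (rdf_set_nonempty G)

lemma romanDom_le {V : Type*} [Fintype V] (G : SimpleGraph V) {f : V → ℕ}
    (hf : IsRDF G f) : romanDom G ≤ ∑ v, f v :=
  Nat.sInf_le ⟨f, hf, rfl⟩

lemma sum_update_zero {V : Type*} [Fintype V] [DecidableEq V] (f : V → ℕ) (u : V)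
    (hu : f u = 0) : ∑ v, Function.update f u 1 v = ∑ v, f v + 1 := by
  rw [Finset.sum_update_of_mem (Finset.mem_univ u),
    ← Finset.add_sum_erase _ f (Finset.mem_univ u), hu]
  simp [Finset.sdiff_singleton_eq_erase]
  ring

lemma romanDom_deleteEdge {V : Type*} [Fintype V] (H : SimpleGraph V) (e : Sym2 V) :
    romanDom (H.deleteEdges {e}) ≤ romanDom H + 1 := by
  classical
  obtain ⟨f, ⟨hf2, hf0⟩, hsum⟩ := romanDom_exists H
  induction e using Sym2.inductionOn with
  | hf u v =>
    -- build a suitable RDF g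
    have key : ∀ g : V → ℕ, IsRDF (H.deleteEdges {s(u, v)}) g →
        ∑ w, g w ≤ romanDom H + 1 → romanDom (H.deleteEdges {s(u, v)}) ≤ romanDom H + 1 :=
      fun g hg hle => le_trans (romanDom_le _ hg) hle
    by_cases hu : f u = 0
    · apply key (Function.update f u 1)
      · constructor
        · intro w
          by_cases hw : w = u <;> simp [Function.update, hw, hf2 w]
        · intro w hw
          have hwu : w ≠ u := by
            intro h; subst h; simp [Function.update] at hw
          rw [Function.update_of_ne hwu] at hw
          obtain ⟨x, hadj, hx2⟩ := hf0 w hw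
          have hxu : x ≠ u := fun h => by rw [h, hu] at hx2; exact absurd hx2 (by norm_num)
          refine ⟨x, ?_, by rw [Function.update_of_ne hxu]; exact hx2⟩
          rw [SimpleGraph.deleteEdges_adj]
          refine ⟨hadj, ?_⟩
          simp only [Set.mem_singleton_iff, Sym2.eq_iff]
          rintro (⟨rfl, rfl⟩ | ⟨rfl, rfl⟩)
          · exact hwu rfl
          · exact hxu rfl
      · rw [sum_update_zero f u hu, hsum]
    · by_cases hv : f v = 0
      · apply key (Function.update f v 1)
        · constructor
          · intro w
            by_cases hw : w = v <;> simp [Function.update, hw, hf2 w]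
          · intro w hw
            have hwv : w ≠ v := by
              intro h; subst h; simp [Function.update] at hw
            rw [Function.update_of_ne hwv] at hw
            obtain ⟨x, hadj, hx2⟩ := hf0 w hw
            have hxv : x ≠ v := fun h => by rw [h, hv] at hx2; exact absurd hx2 (by norm_num)
            refine ⟨x, ?_, by rw [Function.update_of_ne hxv]; exact hx2⟩
            rw [SimpleGraph.deleteEdges_adj]
            refine ⟨hadj, ?_⟩
            simp only [Set.mem_singleton_iff, Sym2.eq_iff]
            rintro (⟨rfl, rfl⟩ | ⟨rfl, rfl⟩)
            · exact hu hw
            · exact hwv rfl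
        · rw [sum_update_zero f v hv, hsum]
      · apply key f
        · refine ⟨hf2, fun w hw => ?_⟩
          obtain ⟨x, hadj, hx2⟩ := hf0 w hw
          refine ⟨x, ?_, hx2⟩
          rw [SimpleGraph.deleteEdges_adj]
          refine ⟨hadj, ?_⟩
          simp only [Set.mem_singleton_iff, Sym2.eq_iff]
          rintro (⟨rfl, rfl⟩ | ⟨rfl, rfl⟩)
          · exact hu hw
          · exact hv hw
        · rw [hsum]; omega

theorem stmt6 {V : Type*} [Fintype V] (G : SimpleGraph V)
    (hΔ : 2 ≤ maxDeg G) (B : Set (Sym2 V)) (hB : B ⊆ G.edgeSet)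
    (hbond : romanDom (G.deleteEdges B) > romanDom G)
    (hmin : B.ncard = romanBondage G) :
    romanDom (G.deleteEdges B) = romanDom G + 1 := by
  classical
  have hBne : B.Nonempty := by
    rcases Set.eq_empty_or_nonempty B with h | h
    · subst h; rw [SimpleGraph.deleteEdges_empty] at hbond; omega
    · exact h
  obtain ⟨e, he⟩ := hBne
  set B' : Set (Sym2 V) := B \ {e} with hB'def
  have hlt : B'.ncard < B.ncard :=
    Set.ncard_diff_singleton_lt_of_mem he (Set.toFinite B)
  have hsplit : G.deleteEdges B = (G.deleteEdges B').deleteEdges {e} := by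
    ext a b
    simp only [SimpleGraph.deleteEdges_adj, hB'def, Set.mem_diff,
      Set.mem_singleton_iff]
    have hne : s(a, b) = e → s(a, b) ∈ B := fun h => h ▸ he
    tauto
  have hB'le : romanDom (G.deleteEdges B') ≤ romanDom G := by
    by_contra hgt
    push_neg at hgt
    have : romanBondage G ≤ B'.ncard :=
      Nat.sInf_le ⟨B', fun x hx => hB hx.1, hgt, rfl⟩
    omega
  have h1 : romanDom (G.deleteEdges B) ≤ romanDom G + 1 := by
    rw [hsplit]
    calc romanDom ((G.deleteEdges B').deleteEdges {e})
        ≤ romanDom (G.deleteEdges B') + 1 := romanDom_deleteEdge _ e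
      _ ≤ romanDom G + 1 := by omega
  omega
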